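/- (Cauchy interlacing, special case) Let A be a symmetric n × n real matrix and B an m × m principal submatrix of A (m < n), with eigenvalues λ_1 ≥ ... ≥ λ_n and μ_1 ≥ ... ≥ μ_m respectively. Then μ_1 ≥ λ_{1 + n - m}. -/

import Mathlib

open Polynomial Matrix

lemma charpoly_conj_pair {k : ℕ} (U V B : Matrix (Fin k) (Fin k) ℝ)
    (hUV : U * V = 1) (hVU : V * U = 1) :
    (U * B * V).charpoly = B.charpoly := by
  have hchm : charmatrix (U * B * V) = U.map (C : ℝ →+* ℝ[X]) * charmatrix B * V.map C := by
    have h1 : (U.map (C : ℝ →+* ℝ[X])) * (V.map C) = 1 := by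
      rw [← Matrix.map_mul, hUV]; simp
    have : charmatrix B = Matrix.scalar (Fin k) (X : ℝ[X]) - B.map (C : ℝ →+* ℝ[X]) := rfl
    rw [this]
    have h2 : charmatrix (U * B * V)
        = Matrix.scalar (Fin k) (X : ℝ[X]) - (U * B * V).map (C : ℝ →+* ℝ[X]) := rfl
    rw [h2, mul_sub, sub_mul]
    congr 1
    · rw [((Matrix.scalar_commute (X : ℝ[X]) (fun r' => Commute.all _ _)
        (U.map (C : ℝ →+* ℝ[X]))).symm).eq, mul_assoc, h1, mul_one]
    · rw [← Matrix.map_mul, ← Matrix.map_mul]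
  rw [Matrix.charpoly, Matrix.charpoly, hchm, det_mul, det_mul, mul_comm, ← mul_assoc,
    ← det_mul, ← Matrix.map_mul, hVU]
  simp

lemma charpoly_diagonal {k : ℕ} (d : Fin k → ℝ) :
    (Matrix.diagonal d).charpoly = ∏ i, (X - C (d i)) := by
  have : charmatrix (Matrix.diagonal d) = Matrix.diagonal (fun i => (X : ℝ[X]) - C (d i)) := by
    ext i j
    by_cases h : i = j <;> simp [charmatrix_apply, Matrix.diagonal_apply, h]
  rw [Matrix.charpoly, this, det_diagonal]

lemma charpoly_hermitian_real {k : ℕ} (B : Matrix (Fin k) (Fin k) ℝ) (hB : B.IsHermitian) :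
    B.charpoly = ∏ i, (X - C (hB.eigenvalues i)) := by
  have hU := hB.eigenvectorUnitary.2
  rw [Matrix.mem_unitaryGroup_iff] at hU
  have hU' := hB.eigenvectorUnitary.2
  rw [Matrix.mem_unitaryGroup_iff'] at hU'
  calc B.charpoly
      = ((hB.eigenvectorUnitary : Matrix (Fin k) (Fin k) ℝ)
          * Matrix.diagonal (RCLike.ofReal ∘ hB.eigenvalues)
          * star (hB.eigenvectorUnitary : Matrix (Fin k) (Fin k) ℝ)).charpoly := by
        conv_lhs => rw [hB.spectral_theorem, Unitary.conjStarAlgAut_apply]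
    _ = (Matrix.diagonal (RCLike.ofReal ∘ hB.eigenvalues)).charpoly :=
        charpoly_conj_pair _ _ _ hU hU'
    _ = ∏ i, (X - C (hB.eigenvalues i)) := by
        rw [_root_.charpoly_diagonal]; rfl
open Polynomial Matrix

lemma multiset_eq_of_prod_eq {k : ℕ} (a b : Fin k → ℝ)
    (h : ∏ i, (X - C (a i)) = ∏ i, (X - C (b i))) :
    Multiset.map a Finset.univ.val = Multiset.map b Finset.univ.val := by
  have ha := roots_multiset_prod_X_sub_C (Multiset.map a Finset.univ.val)
  have hb := roots_multiset_prod_X_sub_C (Multiset.map b Finset.univ.val)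
  rw [Multiset.map_map] at ha hb
  simp only [← Finset.prod_eq_multiset_prod] at ha hb
  rw [← ha, ← hb]
  have : (∏ i, ((fun x => X - C x) ∘ a) i) = ∏ i, ((fun x => X - C x) ∘ b) i := by
    simpa [Function.comp] using h
  rw [this]

open Classical in
lemma count_ge {k : ℕ} (a b : Fin k → ℝ) (ha : Antitone a)
    (hab : Multiset.map a Finset.univ.val = Multiset.map b Finset.univ.val) (j : Fin k) :
    (j : ℕ) + 1 ≤ (Finset.univ.filter (fun i => a j ≤ b i)).card := by
  have h1 : (Finset.univ.filter (fun i => a j ≤ b i)).card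
      = Multiset.countP (fun x => a j ≤ x) (Multiset.map b Finset.univ.val) := by
    rw [Multiset.countP_map]
    rfl
  have h2 : Multiset.countP (fun x => a j ≤ x) (Multiset.map a Finset.univ.val)
      = (Finset.univ.filter (fun i => a j ≤ a i)).card := by
    rw [Multiset.countP_map]
    rfl
  rw [h1, ← hab, h2]
  have hsub : Finset.Iic j ⊆ Finset.univ.filter (fun i => a j ≤ a i) := by
    intro i hi
    simp only [Finset.mem_Iic] at hi
    simp only [Finset.mem_filter, Finset.mem_univ, true_and]
    exact ha hi
  calc (j : ℕ) + 1 = (Finset.Iic j).card := (Fin.card_Iic j).symm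
    _ ≤ _ := Finset.card_le_card hsub

lemma quad_form_eq {k : ℕ} (B : Matrix (Fin k) (Fin k) ℝ) (hB : B.IsHermitian)
    (v : Fin k → ℝ) :
    v ⬝ᵥ (B *ᵥ v) = ∑ i, hB.eigenvalues i * ((star (hB.eigenvectorUnitary : Matrix (Fin k) (Fin k) ℝ) *ᵥ v) i)^2
    ∧ v ⬝ᵥ v = ∑ i, ((star (hB.eigenvectorUnitary : Matrix (Fin k) (Fin k) ℝ) *ᵥ v) i)^2 := by
  set U := (hB.eigenvectorUnitary : Matrix (Fin k) (Fin k) ℝ) with hUdef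
  have hU : U * star U = 1 := by
    have := hB.eigenvectorUnitary.2
    rw [Matrix.mem_unitaryGroup_iff] at this
    exact this
  set w := star U *ᵥ v with hw
  have hUw : U *ᵥ w = v := by
    rw [hw, Matrix.mulVec_mulVec, hU, Matrix.one_mulVec]
  have hstar : star U = Uᵀ := by
    rw [Matrix.star_eq_conjTranspose, Matrix.conjTranspose_eq_transpose_of_trivial]
  have hdot : ∀ z : Fin k → ℝ, v ⬝ᵥ (U *ᵥ z) = w ⬝ᵥ z := by
    intro z
    rw [dotProduct_mulVec, hw, hstar, ← Matrix.mulVec_transpose]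
  have hD : (RCLike.ofReal ∘ hB.eigenvalues : Fin k → ℝ) = hB.eigenvalues := rfl
  constructor
  · calc v ⬝ᵥ (B *ᵥ v)
        = v ⬝ᵥ (U *ᵥ (Matrix.diagonal hB.eigenvalues *ᵥ w)) := by
          conv_lhs => rw [hB.spectral_theorem, Unitary.conjStarAlgAut_apply, hD, ← hUdef]
          rw [← Matrix.mulVec_mulVec, ← Matrix.mulVec_mulVec, ← hw]
      _ = w ⬝ᵥ (Matrix.diagonal hB.eigenvalues *ᵥ w) := hdot _
      _ = ∑ i, hB.eigenvalues i * (w i)^2 := by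
          simp only [dotProduct, Matrix.mulVec_diagonal]
          exact Finset.sum_congr rfl (fun i _ => by ring)
  · calc v ⬝ᵥ v = v ⬝ᵥ (U *ᵥ w) := by rw [hUw]
      _ = w ⬝ᵥ w := hdot _
      _ = ∑ i, (w i)^2 := by
          simp only [dotProduct]
          exact Finset.sum_congr rfl (fun i _ => by ring)

theorem cauchy_interlacing_special_case (n m : ℕ) (hm : 0 < m) (hmn : m < n)
    (A : Matrix (Fin n) (Fin n) ℝ) (hA : A.IsSymm)
    (f : Fin m → Fin n) (hf : Function.Injective f)
    (lam : Fin n → ℝ) (hlam : Antitone lam)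
    (hchA : A.charpoly = ∏ i, (Polynomial.X - Polynomial.C (lam i)))
    (mu : Fin m → ℝ) (hmu : Antitone mu)
    (hchB : (A.submatrix f f).charpoly = ∏ j, (Polynomial.X - Polynomial.C (mu j))) :
    lam ⟨n - m, by omega⟩ ≤ mu ⟨0, hm⟩ := by
  classical
  set k : Fin n := ⟨n - m, by omega⟩ with hk
  show lam k ≤ mu ⟨0, hm⟩
  set B := A.submatrix f f with hBdef
  have hA' : A.IsHermitian := by
    rw [Matrix.IsHermitian, Matrix.conjTranspose_eq_transpose_of_trivial]; exact hA
  have hBsymm : B.IsSymm := by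
    rw [Matrix.IsSymm] at hA ⊢
    rw [hBdef, Matrix.transpose_submatrix, hA]
  have hB' : B.IsHermitian := by
    rw [Matrix.IsHermitian, Matrix.conjTranspose_eq_transpose_of_trivial]; exact hBsymm
  set evA := hA'.eigenvalues with hevA
  set evB := hB'.eigenvalues with hevB
  have hmsA : Multiset.map lam Finset.univ.val = Multiset.map evA Finset.univ.val :=
    multiset_eq_of_prod_eq _ _ (by rw [← hchA, charpoly_hermitian_real A hA'])
  have hmsB : Multiset.map mu Finset.univ.val = Multiset.map evB Finset.univ.val :=
    multiset_eq_of_prod_eq _ _ (by rw [← hchB, charpoly_hermitian_real _ hB'])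
  have hmu0 : ∀ j, evB j ≤ mu ⟨0, hm⟩ := by
    intro j
    have hmem : evB j ∈ Multiset.map mu Finset.univ.val := by
      rw [hmsB]
      exact Multiset.mem_map_of_mem _ (Finset.mem_univ j)
    obtain ⟨j', _, hj'⟩ := Multiset.mem_map.mp hmem
    rw [← hj']
    exact hmu (by simp [Fin.le_def])
  -- the set of indices with large eigenvalues
  set S : Finset (Fin n) := Finset.univ.filter (fun i => lam k ≤ evA i) with hSdef
  have hScard : n - m + 1 ≤ S.card := by
    have := count_ge lam evA hlam hmsA k
    simpa using this
  set U := (hA'.eigenvectorUnitary : Matrix (Fin n) (Fin n) ℝ) with hUdef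
  have hU : U * star U = 1 := by
    have := hA'.eigenvectorUnitary.2
    rwa [Matrix.mem_unitaryGroup_iff] at this
  have hU' : star U * U = 1 := by
    have := hA'.eigenvectorUnitary.2
    rwa [Matrix.mem_unitaryGroup_iff'] at this
  -- extension linear map and the map to the complement of range f
  set ext : (↥S → ℝ) →ₗ[ℝ] (Fin n → ℝ) :=
    { toFun := fun c i => if h : i ∈ S then c ⟨i, h⟩ else 0
      map_add' := by intro c d; funext i; by_cases h : i ∈ S <;> simp [h]
      map_smul' := by intro r c; funext i; by_cases h : i ∈ S <;> simp [h] } with hext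
  set Φ : (↥S → ℝ) →ₗ[ℝ] ({i : Fin n // i ∉ Set.range f} → ℝ) :=
    (LinearMap.funLeft ℝ ℝ (fun t : {i : Fin n // i ∉ Set.range f} => (t : Fin n))).comp ((Matrix.mulVecLin U).comp ext)
    with hΦ
  have hdom : Module.finrank ℝ (↥S → ℝ) = S.card := by
    simp [Module.finrank_fintype_fun_eq_card]
  have hcod : Module.finrank ℝ ({i : Fin n // i ∉ Set.range f} → ℝ) = n - m := by
    rw [Module.finrank_fintype_fun_eq_card]
    have h1 : Fintype.card {i : Fin n // i ∉ Set.range f}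
        = Fintype.card (Fin n) - Fintype.card {i : Fin n // i ∈ Set.range f} :=
      Fintype.card_subtype_compl _
    rw [h1]
    have h2 : Fintype.card {i : Fin n // i ∈ Set.range f} = m := by
      have := Set.card_range_of_injective hf
      simp only [Fintype.card_fin] at this
      convert this using 2
    rw [h2, Fintype.card_fin]
  have hnotinj : ¬ Function.Injective Φ := by
    intro hinj
    have := LinearMap.finrank_le_finrank_of_injective hinj
    rw [hdom, hcod] at this
    omega
  have hexc : ∃ c, Φ c = 0 ∧ c ≠ 0 := by
    by_contra hcon
    push_neg at hcon
    exact hnotinj ((injective_iff_map_eq_zero Φ).mpr hcon)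
  obtain ⟨c, hc0, hcne⟩ := hexc
  set e : Fin n → ℝ := ext c with he
  set x : Fin n → ℝ := U *ᵥ e with hx
  have hxsupp : ∀ i, i ∉ Set.range f → x i = 0 := by
    intro i hi
    exact congrFun hc0 ⟨i, hi⟩
  have hee : star U *ᵥ x = e := by
    rw [hx, Matrix.mulVec_mulVec, hU', Matrix.one_mulVec]
  have hesupp : ∀ i, i ∉ S → e i = 0 := by
    intro i hi
    simp only [he, hext, LinearMap.coe_mk, AddHom.coe_mk]
    exact dif_neg hi
  -- quadratic form facts for A at x
  obtain ⟨hq1, hq2⟩ := quad_form_eq A hA' x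
  rw [hee] at hq1 hq2
  -- positivity
  have hpos : 0 < x ⬝ᵥ x := by
    rw [hq2]
    obtain ⟨s, hs⟩ := Function.ne_iff.mp hcne
    have hse : e (s : Fin n) = c s := by
      simp only [he, hext, LinearMap.coe_mk, AddHom.coe_mk]
      rw [dif_pos s.2]
    apply Finset.sum_pos' (fun i _ => sq_nonneg _)
    refine ⟨s, Finset.mem_univ _, ?_⟩
    rw [hse]
    exact lt_of_le_of_ne (sq_nonneg _) (Ne.symm (pow_ne_zero 2 hs))
  -- lower bound
  have hlower : lam k * (x ⬝ᵥ x) ≤ x ⬝ᵥ (A *ᵥ x) := by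
    rw [hq1, hq2, Finset.mul_sum]
    apply Finset.sum_le_sum
    intro i _
    by_cases hi : i ∈ S
    · exact mul_le_mul_of_nonneg_right ((Finset.mem_filter.mp hi).2) (sq_nonneg _)
    · rw [hesupp i hi]
      simp
  -- restriction of sums to the range of f
  have hrestrict : ∀ g : Fin n → ℝ, (∀ i, i ∉ Set.range f → g i = 0) →
      ∑ i, g i = ∑ j, g (f j) := by
    intro g hg
    have himg : ∑ i ∈ Finset.univ.image f, g i = ∑ j, g (f j) :=
      Finset.sum_image (fun a _ b _ hab => hf hab)
    rw [← himg]
    apply (Finset.sum_subset (Finset.subset_univ _) _).symm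
    intro i _ hi
    apply hg
    intro ⟨j, hj⟩
    exact hi (Finset.mem_image.mpr ⟨j, Finset.mem_univ _, hj⟩)
  set y : Fin m → ℝ := fun j => x (f j) with hy
  have hyy : x ⬝ᵥ x = y ⬝ᵥ y := by
    simp only [dotProduct]
    exact hrestrict (fun i => x i * x i) (fun i hi => by rw [hxsupp i hi, zero_mul])
  have hyBy : x ⬝ᵥ (A *ᵥ x) = y ⬝ᵥ (B *ᵥ y) := by
    have h1 : ∀ i, (A *ᵥ x) i = ∑ j', A i (f j') * y j' := by
      intro i
      simp only [Matrix.mulVec, dotProduct]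
      exact hrestrict (fun i' => A i i' * x i') (fun i' hi' => by rw [hxsupp i' hi', mul_zero])
    calc x ⬝ᵥ (A *ᵥ x) = ∑ i, x i * (A *ᵥ x) i := rfl
      _ = ∑ j, x (f j) * (A *ᵥ x) (f j) :=
          hrestrict _ (fun i hi => by simp [hxsupp i hi])
      _ = ∑ j, y j * ∑ j', A (f j) (f j') * y j' := by
          exact Finset.sum_congr rfl (fun j _ => by rw [h1])
      _ = y ⬝ᵥ (B *ᵥ y) := by
          simp [hBdef, dotProduct, Matrix.mulVec, Matrix.submatrix_apply]
  -- upper bound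
  obtain ⟨hqB1, hqB2⟩ := quad_form_eq B hB' y
  have hupper : y ⬝ᵥ (B *ᵥ y) ≤ mu ⟨0, hm⟩ * (y ⬝ᵥ y) := by
    rw [hqB1, hqB2, Finset.mul_sum]
    exact Finset.sum_le_sum fun i _ => mul_le_mul_of_nonneg_right (hmu0 i) (sq_nonneg _)
  have hchain : lam k * (x ⬝ᵥ x) ≤ mu ⟨0, hm⟩ * (x ⬝ᵥ x) := by
    calc lam k * (x ⬝ᵥ x) ≤ x ⬝ᵥ (A *ᵥ x) := hlower
      _ = y ⬝ᵥ (B *ᵥ y) := hyBy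
      _ ≤ mu ⟨0, hm⟩ * (y ⬝ᵥ y) := hupper
      _ = mu ⟨0, hm⟩ * (x ⬝ᵥ x) := by rw [hyy]
  exact (mul_le_mul_iff_of_pos_right hpos).mp hchain
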